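/- Let A be an n×n real symmetric matrix, B an n×n real symmetric positive definite matrix with smallest eigenvalue λ₁(B) > 0, and u ∈ ℝⁿ a nonzero vector. Then for every α ∈ ℝ there exists a generalized eigenvalue λ of the pencil (A, B) (i.e., a real number λ with det(A − λB) = 0) such that |λ − α| ≤ ‖(A − αB)u‖/(λ₁(B)·‖u‖). -/

import Mathlib

open Matrix
open scoped MatrixOrder

private lemma dotP' {n : ℕ} (P : Matrix (Fin n) (Fin n) ℝ) (a b : Fin n → ℝ) :
    (P *ᵥ a) ⬝ᵥ b = a ⬝ᵥ (Pᵀ *ᵥ b) := by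
  rw [← Matrix.vecMul_transpose, ← Matrix.dotProduct_mulVec]

private lemma sq_transfer' {n : ℕ} (S Bm : Matrix (Fin n) (Fin n) ℝ) (hS : Sᵀ = S)
    (hSB : S * S = Bm) (y : Fin n → ℝ) :
    (S *ᵥ y) ⬝ᵥ (S *ᵥ y) = y ⬝ᵥ (Bm *ᵥ y) := by
  rw [dotP', Matrix.mulVec_mulVec, hS, hSB]

private lemma inner_dot' {n : ℕ} (x z : EuclideanSpace ℝ (Fin n)) :
    (inner ℝ x z : ℝ) = (WithLp.equiv 2 (Fin n → ℝ) x) ⬝ᵥ (WithLp.equiv 2 (Fin n → ℝ) z) := by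
  simp [PiLp.inner_apply, dotProduct, mul_comm]

/-- Lower bound for a quadratic form given an orthonormal family of eigenvectors
with eigenvalues `≥ c`. -/
private lemma quad_lower' {n : ℕ} (M : Matrix (Fin n) (Fin n) ℝ) (hM : Mᵀ = M)
    (v : Fin n → Fin n → ℝ)
    (horth : ∀ i k, v i ⬝ᵥ v k = if i = k then (1:ℝ) else 0)
    (ν : Fin n → ℝ) (hv : ∀ i, M *ᵥ v i = ν i • v i) (c : ℝ) (hc : ∀ i, c ≤ ν i)
    (y : Fin n → ℝ) : c * (y ⬝ᵥ y) ≤ y ⬝ᵥ (M *ᵥ y) := by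
  set P : Matrix (Fin n) (Fin n) ℝ := Matrix.of v with hPdef
  have hsym : ∀ l k, M l k = M k l := fun l k => by
    conv_lhs => rw [← hM]
    exact Matrix.transpose_apply M l k
  have hPPt : P * Pᵀ = 1 := by
    ext i k
    simpa [Matrix.mul_apply, Matrix.one_apply, dotProduct, hPdef] using horth i k
  have hPtP : Pᵀ * P = 1 := mul_eq_one_comm.mp hPPt
  have hPM : P * M = Matrix.diagonal ν * P := by
    ext i k
    have h := congrFun (hv i) k
    simp only [Matrix.mulVec, dotProduct, Pi.smul_apply, smul_eq_mul] at h
    rw [Matrix.diagonal_mul]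
    simp only [Matrix.mul_apply, hPdef, Matrix.of_apply]
    rw [← h]
    exact Finset.sum_congr rfl fun l _ => by rw [hsym l k, mul_comm]
  have hM_eq : M = Pᵀ * Matrix.diagonal ν * P := by
    calc M = (Pᵀ * P) * M := by rw [hPtP, one_mul]
      _ = Pᵀ * (P * M) := by rw [mul_assoc]
      _ = Pᵀ * (Matrix.diagonal ν * P) := by rw [hPM]
      _ = Pᵀ * Matrix.diagonal ν * P := by rw [mul_assoc]
  have e1 : y ⬝ᵥ (M *ᵥ y) = ∑ i, ν i * ((P *ᵥ y) i * (P *ᵥ y) i) := by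
    conv_lhs => rw [hM_eq, ← Matrix.mulVec_mulVec, ← Matrix.mulVec_mulVec]
    rw [← dotP']
    simp only [dotProduct, Matrix.mulVec_diagonal]
    exact Finset.sum_congr rfl fun i _ => by ring
  have e2 : y ⬝ᵥ y = ∑ i, (P *ᵥ y) i * (P *ᵥ y) i := by
    have h : (P *ᵥ y) ⬝ᵥ (P *ᵥ y) = y ⬝ᵥ y := by
      rw [dotP', Matrix.mulVec_mulVec, hPtP, Matrix.one_mulVec]
    rw [← h]
    rfl
  rw [e1, e2, Finset.mul_sum]
  exact Finset.sum_le_sum fun i _ =>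
    mul_le_mul_of_nonneg_right (hc i) (mul_self_nonneg _)

/-- For symmetric `A`, SPD `B` with smallest eigenvalue `λ₁(B) > 0`, and
nonzero `u`, for every `α ∈ ℝ` there exists a generalized eigenvalue `λ` of the pencil
`(A, B)` (i.e., `det(A − λB) = 0`) such that `|λ − α| ≤ ‖(A − αB)u‖/(λ₁(B)·‖u‖)`
(Euclidean norms written as `√(v ⬝ᵥ v)`). -/
theorem gen_pencil_residual_bound
    {n : ℕ} (A B : Matrix (Fin n) (Fin n) ℝ) (hA : A.IsSymm) (hB : B.PosDef)
    (lam1B : ℝ) (hlam1Bpos : 0 < lam1B)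
    (hlam1B : ∃ v : Fin n → ℝ, v ≠ 0 ∧ B.mulVec v = lam1B • v)
    (hlam1Bmin : ∀ (ν : ℝ) (v : Fin n → ℝ), v ≠ 0 → B.mulVec v = ν • v → lam1B ≤ ν)
    (u : Fin n → ℝ) (hu : u ≠ 0) :
    ∀ α : ℝ, ∃ lam : ℝ, (A - lam • B).det = 0 ∧
      |lam - α| ≤ Real.sqrt (((A - α • B).mulVec u) ⬝ᵥ ((A - α • B).mulVec u)) /
        (lam1B * Real.sqrt (u ⬝ᵥ u)) := by
  intro α
  rcases Nat.eq_zero_or_pos n with hn | hn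
  · exact absurd (funext fun i => (hn ▸ i).elim0) hu
  have hBpsd : B.PosSemidef := hB.posSemidef
  set S := CFC.sqrt B with hSdef
  have hSps : S.PosSemidef := (CFC.sqrt_nonneg B).posSemidef
  have hSsymm : Sᵀ = S := by
    have h := hSps.1
    rwa [Matrix.IsHermitian, Matrix.conjTranspose_eq_transpose_of_trivial] at h
  have hSS : S * S = B := CFC.sqrt_mul_sqrt_self B hBpsd.nonneg
  have hdetS : IsUnit S.det := by
    rw [isUnit_iff_ne_zero]
    intro h
    have : B.det = 0 := by rw [← hSS, Matrix.det_mul, h, zero_mul]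
    exact hB.det_pos.ne' this
  set T := S⁻¹ with hTdef
  have hST : S * T = 1 := Matrix.mul_nonsing_inv S hdetS
  have hTS : T * S = 1 := Matrix.nonsing_inv_mul S hdetS
  have hTsymm : Tᵀ = T := by
    show S⁻¹ᵀ = S⁻¹
    rw [Matrix.transpose_nonsing_inv, hSsymm]
  set C := T * A * T with hCdef
  have hCsymm : Cᵀ = C := by
    rw [hCdef, Matrix.transpose_mul, Matrix.transpose_mul, hTsymm, hA, ← mul_assoc]
  have hCH : C.IsHermitian := by
    rw [Matrix.IsHermitian, Matrix.conjTranspose_eq_transpose_of_trivial, hCsymm]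
  have factor : ∀ t : ℝ, A - t • B = S * (C - t • 1) * S := by
    intro t
    have h1 : S * C * S = A := by
      rw [hCdef, ← mul_assoc, ← mul_assoc, hST, one_mul, mul_assoc, hTS, mul_one]
    rw [Matrix.mul_sub, Matrix.sub_mul, h1, Matrix.mul_smul, mul_one,
      Matrix.smul_mul, hSS]
  set b := hCH.eigenvectorBasis with hbdef
  set μ := hCH.eigenvalues with hμdef
  set vv : Fin n → Fin n → ℝ := fun i => ⇑(b i) with hvvdef
  have hvv : ∀ i, C *ᵥ vv i = μ i • vv i := fun i => hCH.mulVec_eigenvectorBasis i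
  have horth : ∀ i k, vv i ⬝ᵥ vv k = if i = k then (1:ℝ) else 0 := fun i k =>
    (inner_dot' (b i) (b k)).symm.trans (orthonormal_iff_ite.mp b.orthonormal i k)
  have hvv0 : ∀ i, vv i ≠ 0 := by
    intro i hcontra
    apply b.orthonormal.ne_zero i
    apply (WithLp.equiv 2 (Fin n → ℝ)).injective
    simpa [hvvdef] using hcontra
  obtain ⟨j, -, hj⟩ := Finset.exists_min_image Finset.univ (fun i => |μ i - α|)
    ⟨⟨0, hn⟩, Finset.mem_univ _⟩
  refine ⟨μ j, ?_, ?_⟩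
  · have hvec : (C - μ j • 1) *ᵥ vv j = 0 := by
      rw [Matrix.sub_mulVec, hvv j, Matrix.smul_mulVec, Matrix.one_mulVec, sub_self]
    have hdetC : (C - μ j • 1).det = 0 :=
      Matrix.exists_mulVec_eq_zero_iff.mp ⟨vv j, hvv0 j, hvec⟩
    rw [factor, Matrix.det_mul, Matrix.det_mul, hdetC, mul_zero, zero_mul]
  · set X := C - α • (1 : Matrix (Fin n) (Fin n) ℝ) with hXdef
    have hXsymm : Xᵀ = X := by
      rw [hXdef, Matrix.transpose_sub, hCsymm, Matrix.transpose_smul, Matrix.transpose_one]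
    set w := S *ᵥ u with hwdef
    set y := X *ᵥ w with hydef
    have hBH : B.IsHermitian := hB.1
    have hBsymm : Bᵀ = B := by
      have h := hBH
      rwa [Matrix.IsHermitian, Matrix.conjTranspose_eq_transpose_of_trivial] at h
    set bb := hBH.eigenvectorBasis with hbbdef
    set vb : Fin n → Fin n → ℝ := fun i => ⇑(bb i) with hvbdef
    have hvb : ∀ i, B *ᵥ vb i = hBH.eigenvalues i • vb i :=
      fun i => hBH.mulVec_eigenvectorBasis i
    have horthb : ∀ i k, vb i ⬝ᵥ vb k = if i = k then (1:ℝ) else 0 := fun i k =>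
      (inner_dot' (bb i) (bb k)).symm.trans (orthonormal_iff_ite.mp bb.orthonormal i k)
    have hvb0 : ∀ i, vb i ≠ 0 := by
      intro i hcontra
      apply bb.orthonormal.ne_zero i
      apply (WithLp.equiv 2 (Fin n → ℝ)).injective
      simpa [hvbdef] using hcontra
    have hBeig : ∀ i, lam1B ≤ hBH.eigenvalues i := fun i =>
      hlam1Bmin _ (vb i) (hvb0 i) (hvb i)
    have quadB : ∀ z : Fin n → ℝ, lam1B * (z ⬝ᵥ z) ≤ z ⬝ᵥ (B *ᵥ z) := fun z =>
      quad_lower' B hBsymm vb horthb hBH.eigenvalues hvb lam1B hBeig z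
    have hXb : ∀ i, X *ᵥ vv i = (μ i - α) • vv i := by
      intro i
      rw [hXdef, Matrix.sub_mulVec, hvv i, Matrix.smul_mulVec,
        Matrix.one_mulVec, sub_smul]
    have hXXb : ∀ i, (X * X) *ᵥ vv i = ((μ i - α) ^ 2) • vv i := by
      intro i
      rw [← Matrix.mulVec_mulVec, hXb i, Matrix.mulVec_smul, hXb i, smul_smul, ← sq]
    have hXXsymm : (X * X)ᵀ = X * X := by rw [Matrix.transpose_mul, hXsymm]
    have hceig : ∀ i, (μ j - α) ^ 2 ≤ (μ i - α) ^ 2 := by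
      intro i
      have h := pow_le_pow_left₀ (abs_nonneg (μ j - α)) (hj i (Finset.mem_univ i)) 2
      rwa [sq_abs, sq_abs] at h
    have quadX : ((μ j - α) ^ 2) * (w ⬝ᵥ w) ≤ w ⬝ᵥ ((X * X) *ᵥ w) :=
      quad_lower' (X * X) hXXsymm vv horth _ hXXb _ hceig w
    have hres : (A - α • B) *ᵥ u = S *ᵥ y := by
      rw [factor α, ← hXdef, ← Matrix.mulVec_mulVec, ← Matrix.mulVec_mulVec,
        ← hwdef, ← hydef]
    have h1 : ((A - α • B) *ᵥ u) ⬝ᵥ ((A - α • B) *ᵥ u) = y ⬝ᵥ (B *ᵥ y) := by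
      rw [hres]; exact sq_transfer' S B hSsymm hSS y
    have h2 : y ⬝ᵥ y = w ⬝ᵥ ((X * X) *ᵥ w) := by
      rw [hydef]; exact sq_transfer' X (X * X) hXsymm rfl w
    have h3 : w ⬝ᵥ w = u ⬝ᵥ (B *ᵥ u) := sq_transfer' S B hSsymm hSS u
    have huu : (0:ℝ) < u ⬝ᵥ u := by
      have hnn : (0:ℝ) ≤ u ⬝ᵥ u := Finset.sum_nonneg fun i _ => mul_self_nonneg (u i)
      rcases lt_or_eq_of_le hnn with h | h
      · exact h
      · exact absurd (dotProduct_self_eq_zero.mp h.symm) hu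
    have c_nonneg : (0:ℝ) ≤ (μ j - α) ^ 2 := sq_nonneg _
    have chain : ((μ j - α) ^ 2) * (lam1B ^ 2 * (u ⬝ᵥ u))
        ≤ ((A - α • B) *ᵥ u) ⬝ᵥ ((A - α • B) *ᵥ u) := by
      have i1 : lam1B * (u ⬝ᵥ u) ≤ w ⬝ᵥ w := by rw [h3]; exact quadB u
      have i2 : ((μ j - α) ^ 2) * (lam1B * (u ⬝ᵥ u)) ≤ y ⬝ᵥ y := by
        rw [h2]
        calc ((μ j - α) ^ 2) * (lam1B * (u ⬝ᵥ u))
            ≤ ((μ j - α) ^ 2) * (w ⬝ᵥ w) := mul_le_mul_of_nonneg_left i1 c_nonneg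
          _ ≤ w ⬝ᵥ ((X * X) *ᵥ w) := quadX
      calc ((μ j - α) ^ 2) * (lam1B ^ 2 * (u ⬝ᵥ u))
          = lam1B * (((μ j - α) ^ 2) * (lam1B * (u ⬝ᵥ u))) := by ring
        _ ≤ lam1B * (y ⬝ᵥ y) := mul_le_mul_of_nonneg_left i2 hlam1Bpos.le
        _ ≤ y ⬝ᵥ (B *ᵥ y) := quadB y
        _ = ((A - α • B) *ᵥ u) ⬝ᵥ ((A - α • B) *ᵥ u) := h1.symm
    have hK : (0:ℝ) < lam1B * Real.sqrt (u ⬝ᵥ u) :=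
      mul_pos hlam1Bpos (Real.sqrt_pos.mpr huu)
    rw [le_div_iff₀ hK]
    have hnn : (0:ℝ) ≤ |μ j - α| * (lam1B * Real.sqrt (u ⬝ᵥ u)) :=
      mul_nonneg (abs_nonneg _) hK.le
    have key2 : (|μ j - α| * (lam1B * Real.sqrt (u ⬝ᵥ u))) ^ 2
        ≤ ((A - α • B) *ᵥ u) ⬝ᵥ ((A - α • B) *ᵥ u) := by
      have e : (|μ j - α| * (lam1B * Real.sqrt (u ⬝ᵥ u))) ^ 2
          = ((μ j - α) ^ 2) * (lam1B ^ 2 * (u ⬝ᵥ u)) := by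
        rw [mul_pow, mul_pow, sq_abs, Real.sq_sqrt huu.le]
      rw [e]; exact chain
    calc |μ j - α| * (lam1B * Real.sqrt (u ⬝ᵥ u))
        = Real.sqrt ((|μ j - α| * (lam1B * Real.sqrt (u ⬝ᵥ u))) ^ 2) :=
          (Real.sqrt_sq hnn).symm
      _ ≤ Real.sqrt (((A - α • B) *ᵥ u) ⬝ᵥ ((A - α • B) *ᵥ u)) :=
          Real.sqrt_le_sqrt key2
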